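/- Suppose h_k = a_0 + a_1 k + a_2 k², x_k = b_0 + b_1 k + b_2 k², and g_k = x_{k-1}(h_k - h_0) + d_k where d_k satisfies d_{k+3} - d_k = 3(d_{k+2} - d_{k+1}) and d_0 = 0. Then g satisfies the fifth-order difference equation g_{k+5} - g_k = 5(g_{k+4} - g_{k+1}) - 10(g_{k+3} - g_{k+2}) with g_0 = 0. -/
import Mathlib

/-- If `h` and `x` are quadratic sequences and `g_k = x_{k-1}(h_k - h_0) + d_k` where
`d` satisfies the third-order difference equation with `d_0 = 0`, then `g` satisfies the
fifth-order difference equation with `g_0 = 0`. -/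
theorem g_satisfies_fifth_order {K : Type*} [Field K] [CharZero K]
    (a₀ a₁ a₂ b₀ b₁ b₂ : K) (h x g d : ℤ → K)
    (hh : ∀ k : ℤ, h k = a₀ + a₁ * (k : K) + a₂ * (k : K) ^ 2)
    (hx : ∀ k : ℤ, x k = b₀ + b₁ * (k : K) + b₂ * (k : K) ^ 2)
    (hd : ∀ k : ℤ, d (k + 3) - d k = 3 * (d (k + 2) - d (k + 1)))
    (hd0 : d 0 = 0)
    (hg : ∀ k : ℤ, g k = x (k - 1) * (h k - h 0) + d k) :
    g 0 = 0 ∧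
      ∀ k : ℤ, g (k + 5) - g k =
        5 * (g (k + 4) - g (k + 1)) - 10 * (g (k + 3) - g (k + 2)) := by
  constructor
  · rw [hg 0, hd0]; ring
  · intro k
    have h1 := hd k
    have h2 := hd (k + 1)
    have h3 := hd (k + 2)
    have e1 : k + 1 + 3 = k + 4 := by ring
    have e2 : k + 1 + 2 = k + 3 := by ring
    have e3 : k + 1 + 1 = k + 2 := by ring
    have e4 : k + 2 + 3 = k + 5 := by ring
    have e5 : k + 2 + 2 = k + 4 := by ring
    have e6 : k + 2 + 1 = k + 3 := by ring
    rw [e1, e2, e3] at h2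
    rw [e4, e5, e6] at h3
    simp only [hg, hh, hx]
    push_cast
    linear_combination h1 - 2 * h2 + h3
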